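/- Let W be a convex body in ℝ^d with inradius r(W) > 0, and let k ∈ {0, …, d-1}. Then V_k(W)/V_d(W) ≤ (2^d - 1) / (κ_{d-k} · r(W)^{d-k}), where V_i denotes the i-th intrinsic volume and κ_n is the volume of the n-dimensional unit ball. -/

import Mathlib

open MeasureTheory Metric Set Pointwise

/-- Volume of the unit ball in `ℝ^n`. -/
noncomputable def unitBallVol (n : ℕ) : ℝ :=
  (volume (Metric.ball (0 : EuclideanSpace ℝ (Fin n)) 1)).toReal

lemma unitBallVol_zero : unitBallVol 0 = 1 := by
  have h : (Metric.ball (0 : EuclideanSpace ℝ (Fin 0)) 1) = Set.univ := by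
    ext x; simp [Subsingleton.elim x 0]
  have h2 := ((EuclideanSpace.volume_preserving_symm_measurableEquiv_toLp (Fin 0)).symm
      _).measure_preimage
    (MeasurableSet.univ : MeasurableSet (Set.univ : Set (EuclideanSpace ℝ (Fin 0)))).nullMeasurableSet
  rw [unitBallVol, h, ← h2]
  simp [MeasureTheory.volume_pi, Measure.pi_univ]

lemma unitBallVol_pos (n : ℕ) : 0 < unitBallVol n :=
  ENNReal.toReal_pos (measure_ball_pos _ _ one_pos).ne' measure_ball_lt_top.ne

/-- For a convex body `W ⊆ ℝ^d` with inradius `rW > 0` and `k < d`,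
`V_k(W)/V_d(W) ≤ (2^d - 1)/(κ_{d-k} rW^{d-k})`, where the intrinsic volumes `V i`
are characterized by the Steiner formula, are nonnegative, and `V d` is Lebesgue measure. -/
theorem stmt0 (d k : ℕ) (hk : k < d)
    (W : Set (EuclideanSpace ℝ (Fin d)))
    (hWconv : Convex ℝ W) (hWcomp : IsCompact W) (hWne : W.Nonempty)
    (V : ℕ → Set (EuclideanSpace ℝ (Fin d)) → ℝ)
    (hVd : ∀ A : Set (EuclideanSpace ℝ (Fin d)), V d A = (volume A).toReal)
    (hSteiner : ∀ r : ℝ, 0 ≤ r →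
      V d (Metric.cthickening r W) =
        ∑ i ∈ Finset.range (d + 1), unitBallVol (d - i) * r ^ (d - i) * V i W)
    (hVnonneg : ∀ i, i ≤ d → 0 ≤ V i W)
    (rW : ℝ) (hrW : 0 < rW)
    (hrin : ∃ c : EuclideanSpace ℝ (Fin d), Metric.closedBall c rW ⊆ W) :
    V k W / V d W ≤ ((2 : ℝ) ^ d - 1) / (unitBallVol (d - k) * rW ^ (d - k)) := by
  obtain ⟨c, hc⟩ := hrin
  -- volume of W is positive and finite
  have hWfin : volume W < ⊤ := hWcomp.measure_lt_top
  have hWpos : (0 : ENNReal) < volume W :=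
    lt_of_lt_of_le (measure_ball_pos volume c hrW) (measure_mono ((ball_subset_closedBall).trans hc))
  have hVdpos : 0 < V d W := by
    rw [hVd]; exact ENNReal.toReal_pos hWpos.ne' hWfin.ne
  -- cthickening rW W ⊆ (-c) +ᵥ (W + W)
  have hthick : Metric.cthickening rW W ⊆ (-c) +ᵥ (W + W) := by
    rw [← hWcomp.add_closedBall_zero hrW.le]
    rintro x ⟨w, hw, b, hb, rfl⟩
    refine ⟨w + (b + c), ⟨w, hw, b + c, ?_, rfl⟩, by simp only [vadd_eq_add]; abel⟩
    apply hc
    simp only [mem_closedBall] at hb ⊢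
    simpa [dist_eq_norm] using hb
  -- volume bound for (-c) +ᵥ (W + W)
  have hWW : W + W = (2 : ℝ) • W := by
    have := hWconv.add_smul (p := (1 : ℝ)) (q := 1) zero_le_one zero_le_one
    norm_num at this
    rw [this]
  have hvol2 : volume ((-c) +ᵥ (W + W)) = ENNReal.ofReal ((2 : ℝ) ^ d) * volume W := by
    rw [measure_vadd, hWW, Measure.addHaar_smul, finrank_euclideanSpace_fin]
    norm_num
  -- upper bound on the Steiner volume
  have hub : V d (Metric.cthickening rW W) ≤ (2 : ℝ) ^ d * V d W := by
    rw [hVd, hVd]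
    have h1 : volume (Metric.cthickening rW W) ≤ ENNReal.ofReal ((2 : ℝ) ^ d) * volume W := by
      rw [← hvol2]; exact measure_mono hthick
    have h2 : (ENNReal.ofReal ((2 : ℝ) ^ d) * volume W).toReal = (2 : ℝ) ^ d * (volume W).toReal := by
      rw [ENNReal.toReal_mul, ENNReal.toReal_ofReal (by positivity)]
    calc (volume (Metric.cthickening rW W)).toReal
        ≤ (ENNReal.ofReal ((2 : ℝ) ^ d) * volume W).toReal := by
          apply ENNReal.toReal_mono _ h1
          exact (ENNReal.mul_lt_top ENNReal.ofReal_lt_top hWfin).ne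
      _ = (2 : ℝ) ^ d * (volume W).toReal := h2
  -- lower bound on the Steiner sum: keep terms i = k and i = d
  have hlb : unitBallVol (d - k) * rW ^ (d - k) * V k W + V d W ≤
      V d (Metric.cthickening rW W) := by
    rw [hSteiner rW hrW.le]
    have hsub : ({k, d} : Finset ℕ) ⊆ Finset.range (d + 1) := by
      intro i hi
      simp only [Finset.mem_insert, Finset.mem_singleton] at hi
      rcases hi with rfl | rfl <;> simp [Finset.mem_range] <;> omega
    have hpair : ∑ i ∈ ({k, d} : Finset ℕ), unitBallVol (d - i) * rW ^ (d - i) * V i W =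
        unitBallVol (d - k) * rW ^ (d - k) * V k W + V d W := by
      rw [Finset.sum_pair hk.ne]
      simp [Nat.sub_self, unitBallVol_zero]
    rw [← hpair]
    apply Finset.sum_le_sum_of_subset_of_nonneg hsub
    intro i hi _
    have hi' : i ≤ d := by simp only [Finset.mem_range] at hi; omega
    have := hVnonneg i hi'
    have := (unitBallVol_pos (d - i)).le
    positivity
  -- combine
  have hkey : unitBallVol (d - k) * rW ^ (d - k) * V k W ≤ ((2 : ℝ) ^ d - 1) * V d W := by
    nlinarith [hlb.trans hub]
  have hκ : 0 < unitBallVol (d - k) * rW ^ (d - k) := by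
    have := unitBallVol_pos (d - k); positivity
  rw [div_le_div_iff₀ hVdpos hκ]
  nlinarith [hkey]
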